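/- Let G be an abelian group such that multiplication by a prime ℓ is surjective on G and has finite kernel G₁ of order ℓ^h. Then for every natural number n, the kernel Gₙ of multiplication by ℓ^n on G is a free ℤ/ℓ^nℤ-module of rank h, i.e. Gₙ ≅ (ℤ/ℓ^nℤ)^h. -/

import Mathlib

/-- The `m`-torsion subgroup `{w | m • w = 0}` of an abelian group. -/
def torsionSub (G : Type*) [AddCommGroup G] (m : ℕ) : AddSubgroup G where
  carrier := {x | m • x = 0}
  zero_mem' := by simp
  add_mem' := by
    intro a b ha hb
    simp only [Set.mem_setOf_eq] at *
    rw [smul_add, ha, hb, add_zero]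
  neg_mem' := by
    intro a ha
    simp only [Set.mem_setOf_eq] at *
    rw [smul_neg, ha, neg_zero]

/-- An `AddEquiv` maps `m`-torsion to `m`-torsion. -/
def torsionCongr {M N : Type*} [AddCommGroup M] [AddCommGroup N] (e : M ≃+ N) (m : ℕ) :
    torsionSub M m ≃+ torsionSub N m where
  toFun x := ⟨e x, by show m • (e x : N) = 0; rw [← map_nsmul, x.2, map_zero]⟩
  invFun y := ⟨e.symm y, by show m • (e.symm y : M) = 0; rw [← map_nsmul, y.2, map_zero]⟩
  left_inv x := by ext; simp
  right_inv y := by ext; simp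
  map_add' x y := by ext; simp

/-- Torsion of a product is the product of torsions. -/
def torsionPi {ι : Type*} (M : ι → Type*) [∀ i, AddCommGroup (M i)] (m : ℕ) :
    torsionSub (∀ i, M i) m ≃+ ∀ i, torsionSub (M i) m where
  toFun x := fun i => ⟨x.1 i, congrFun x.2 i⟩
  invFun y := ⟨fun i => (y i).1, funext fun i => (y i).2⟩
  left_inv x := by ext; rfl
  right_inv y := by ext; rfl
  map_add' x y := by ext; rfl

open Finset in
lemma card_torsion_zmod (ℓ k : ℕ) (hℓ : ℓ.Prime) (hk : 1 ≤ k) :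
    Nat.card (torsionSub (ZMod (ℓ ^ k)) ℓ) = ℓ := by
  classical
  haveI : NeZero (ℓ ^ k) := ⟨pow_ne_zero _ hℓ.pos.ne'⟩
  have hcard : Nat.card (torsionSub (ZMod (ℓ ^ k)) ℓ)
      = Fintype.card {x : ZMod (ℓ ^ k) // ℓ • x = 0} := by
    rw [Nat.card_eq_fintype_card]
    exact Fintype.card_congr (Equiv.subtypeEquivRight (fun _ => Iff.rfl))
  have hub : Fintype.card {x : ZMod (ℓ ^ k) // ℓ • x = 0} ≤ ℓ := by
    rw [Fintype.card_subtype]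
    exact IsAddCyclic.card_nsmul_eq_zero_le hℓ.pos
  have hlb : ℓ ≤ Fintype.card {x : ZMod (ℓ ^ k) // ℓ • x = 0} := by
    haveI : NeZero ℓ := ⟨hℓ.pos.ne'⟩
    have hm : ∀ v : ℕ, ℓ * (v * ℓ ^ (k-1)) = v * ℓ ^ k := by
      intro v
      rw [mul_left_comm]
      congr 1
      rw [← pow_succ', Nat.sub_add_cancel hk]
    have := Fintype.card_le_of_injective
      (fun a : ZMod ℓ => (⟨((a.val * ℓ ^ (k-1) : ℕ) : ZMod (ℓ ^ k)), by
        show ℓ • ((a.val * ℓ ^ (k-1) : ℕ) : ZMod (ℓ ^ k)) = 0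
        rw [nsmul_eq_mul, ← Nat.cast_mul, hm, Nat.cast_mul]
        simp⟩ : {x : ZMod (ℓ ^ k) // ℓ • x = 0}))
      ?_
    · simpa using this
    · intro a b hab
      simp only [Subtype.mk.injEq] at hab
      rw [ZMod.natCast_eq_natCast_iff] at hab
      have hpow : ℓ ^ k = ℓ * ℓ ^ (k - 1) := by
        rw [← pow_succ', Nat.sub_add_cancel hk]
      rw [hpow] at hab
      have hab' : a.val ≡ b.val [MOD ℓ] := by
        refine Nat.ModEq.mul_right_cancel' (c := ℓ ^ (k-1)) (pow_ne_zero _ hℓ.pos.ne') ?_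
        simpa [mul_comm] using hab
      have := (ZMod.natCast_eq_natCast_iff _ _ _).2 hab'
      simpa [ZMod.natCast_val, ZMod.cast_id] using this
  omega

lemma card_torsion_pow (ℓ : ℕ) (h : ℕ) (G : Type*) [AddCommGroup G]
    (hsurj : Function.Surjective (fun x : G => ℓ • x))
    (hker : Nat.card (torsionSub G ℓ) = ℓ ^ h) (hℓpos : 0 < ℓ) :
    ∀ n : ℕ, Finite (torsionSub G (ℓ ^ n)) ∧
      Nat.card (torsionSub G (ℓ ^ n)) = ℓ ^ (h * n) := by
  haveI hG1 : Finite (torsionSub G ℓ) :=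
    Nat.finite_of_card_ne_zero (by rw [hker]; exact (pow_pos hℓpos h).ne')
  intro n
  induction n with
  | zero =>
    haveI : Subsingleton (torsionSub G (ℓ ^ 0)) := by
      constructor
      rintro ⟨a, ha⟩ ⟨b, hb⟩
      have ha' : a = 0 := by
        have h1 : ℓ ^ 0 • a = 0 := ha
        rwa [pow_zero, one_smul] at h1
      have hb' : b = 0 := by
        have h1 : ℓ ^ 0 • b = 0 := hb
        rwa [pow_zero, one_smul] at h1
      simp [ha', hb']
    exact ⟨inferInstance, by rw [Nat.card_of_subsingleton (0 : torsionSub G (ℓ ^ 0))]; simp⟩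
  | succ n ih =>
    obtain ⟨ihfin, ihcard⟩ := ih
    set A := torsionSub G (ℓ ^ (n + 1))
    set B := torsionSub G (ℓ ^ n)
    have hAB : ∀ x : A, ℓ ^ n • (ℓ • (x : G)) = 0 := by
      intro x
      rw [smul_smul, ← pow_succ]
      exact x.2
    let φ : A →+ B :=
      { toFun := fun x => ⟨ℓ • (x : G), hAB x⟩
        map_zero' := by ext; simp
        map_add' := by intro x y; ext; simp }
    have hφsurj : Function.Surjective φ := by
      intro y
      obtain ⟨x, hx⟩ := hsurj (y : G)
      have hx' : ℓ • x = (y : G) := hx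
      refine ⟨⟨x, ?_⟩, ?_⟩
      · show ℓ ^ (n+1) • x = 0
        rw [pow_succ, mul_smul, hx']
        exact y.2
      · ext
        exact hx'
    let eker : (φ.ker : Type _) ≃+ torsionSub G ℓ :=
      { toFun := fun x => ⟨((x : A) : G), by
          have hx : φ (x : A) = 0 := x.2
          exact congrArg Subtype.val hx⟩
        invFun := fun y => ⟨⟨(y : G), by
          show ℓ ^ (n+1) • (y : G) = 0
          rw [pow_succ, mul_smul, y.2, smul_zero]⟩, by
          show φ _ = 0
          ext
          exact y.2⟩
        left_inv := fun x => by ext; rfl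
        right_inv := fun y => by ext; rfl
        map_add' := fun x y => by ext; rfl }
    haveI : Finite φ.ker := Finite.of_equiv _ eker.symm.toEquiv
    have equot : (A ⧸ φ.ker) ≃+ B := QuotientAddGroup.quotientKerEquivOfSurjective φ hφsurj
    haveI : Finite (A ⧸ φ.ker) := Finite.of_equiv _ equot.symm.toEquiv
    haveI hAfin : Finite A := Finite.of_addSubgroup_quotient (H := φ.ker)
    refine ⟨hAfin, ?_⟩
    have hc : Nat.card A = Nat.card (A ⧸ φ.ker) * Nat.card φ.ker :=
      AddSubgroup.card_eq_card_quotient_mul_card_addSubgroup φ.ker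
    rw [hc, Nat.card_congr equot.toEquiv, Nat.card_congr eker.toEquiv, ihcard, hker, ← pow_add]
    ring_nf

/-- If multiplication by the prime `ℓ` is surjective on an abelian group `G` and has
finite kernel of order `ℓ^h`, then for every `n` the kernel of multiplication by `ℓ^n`
is a free `ℤ/ℓ^nℤ`-module of rank `h`, i.e. isomorphic to `(ℤ/ℓ^nℤ)^h`. -/
theorem torsion_of_divisible_free (ℓ : ℕ) (hℓ : ℓ.Prime) (h : ℕ)
    (G : Type*) [AddCommGroup G]
    (hsurj : Function.Surjective (fun x : G => ℓ • x))
    (hker : Nat.card (torsionSub G ℓ) = ℓ ^ h) :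
    ∀ n : ℕ, Nonempty (torsionSub G (ℓ ^ n) ≃+ (Fin h → ZMod (ℓ ^ n))) := by
  classical
  intro n
  rcases Nat.eq_zero_or_pos n with hn0 | hn
  · subst hn0
    haveI : Subsingleton (torsionSub G (ℓ ^ 0)) := by
      constructor
      rintro ⟨a, ha⟩ ⟨b, hb⟩
      have ha' : a = 0 := by
        have h1 : ℓ ^ 0 • a = 0 := ha
        rwa [pow_zero, one_smul] at h1
      have hb' : b = 0 := by
        have h1 : ℓ ^ 0 • b = 0 := hb
        rwa [pow_zero, one_smul] at h1
      simp [ha', hb']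
    haveI : Subsingleton (ZMod (ℓ ^ 0)) := by rw [pow_zero]; infer_instance
    haveI : Unique (torsionSub G (ℓ ^ 0)) := uniqueOfSubsingleton 0
    haveI : Unique (Fin h → ZMod (ℓ ^ 0)) := uniqueOfSubsingleton 0
    exact ⟨AddEquiv.ofUnique⟩
  obtain ⟨hAfin, hAcard⟩ := card_torsion_pow ℓ h G hsurj hker hℓ.pos n
  haveI := hAfin
  obtain ⟨ι, hι, m, hm1, ⟨e⟩⟩ :=
    AddCommGroup.equiv_directSum_zmod_of_finite' (torsionSub G (ℓ ^ n))
  haveI := hι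
  let e' : torsionSub G (ℓ ^ n) ≃+ ∀ i, ZMod (m i) := e.trans (DirectSum.addEquivProd _)
  -- every element of the product is killed by ℓ ^ n
  have htor : ∀ x : torsionSub G (ℓ ^ n), ℓ ^ n • x = 0 := by
    intro x
    ext
    have hx : ℓ ^ n • (x : G) = 0 := x.2
    simpa using hx
  have hzero : ∀ f : (∀ i, ZMod (m i)), ℓ ^ n • f = 0 := by
    intro f
    calc ℓ ^ n • f = e' (ℓ ^ n • e'.symm f) := by rw [map_nsmul, e'.apply_symm_apply]
    _ = 0 := by rw [htor, map_zero]
  -- each m i is a power ℓ ^ (k i), 1 ≤ k i ≤ n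
  have hdvd : ∀ i, m i ∣ ℓ ^ n := by
    intro i
    haveI : NeZero (m i) := ⟨by have := hm1 i; omega⟩
    have hf := congrFun (hzero (fun _ => 1)) i
    have hf' : ((ℓ ^ n : ℕ) : ZMod (m i)) = 0 := by
      simpa [Pi.smul_apply, nsmul_eq_mul] using hf
    exact (ZMod.natCast_eq_zero_iff _ _).1 hf'
  have hexists : ∀ i, ∃ k, 1 ≤ k ∧ k ≤ n ∧ m i = ℓ ^ k := by
    intro i
    obtain ⟨k, hkn, hmk⟩ := (Nat.dvd_prime_pow hℓ).1 (hdvd i)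
    refine ⟨k, ?_, hkn, hmk⟩
    rcases Nat.eq_zero_or_pos k with hk0 | hk
    · exfalso; have := hm1 i; rw [hmk, hk0, pow_zero] at this; omega
    · exact hk
  choose k hk1 hkn hmk using hexists
  -- cardinality count
  have hprod : ℓ ^ (h * n) = ℓ ^ (∑ i, k i) := by
    rw [← hAcard, Nat.card_congr e'.toEquiv, Nat.card_pi]
    rw [← Finset.prod_pow_eq_pow_sum]
    congr 1
    funext i
    rw [Nat.card_zmod, hmk i]
  have hsum : h * n = ∑ i, k i := Nat.pow_right_injective hℓ.two_le hprod
  -- torsion count : card ι = h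
  have hetors : torsionSub G ℓ ≃+ torsionSub (torsionSub G (ℓ ^ n)) ℓ :=
    { toFun := fun y => ⟨⟨(y : G), by
        show ℓ ^ n • (y : G) = 0
        have : ℓ ^ n • (y : G) = ℓ ^ (n - 1) • (ℓ • (y : G)) := by
          rw [smul_smul, ← pow_succ, Nat.sub_add_cancel hn]
        rw [this, y.2, smul_zero]⟩, by
        show ℓ • (⟨(y : G), _⟩ : torsionSub G (ℓ ^ n)) = 0
        ext
        have hy : ℓ • (y : G) = 0 := y.2
        simpa using hy⟩
      invFun := fun t => ⟨((t : torsionSub G (ℓ ^ n)) : G), by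
        have ht : ℓ • (t : torsionSub G (ℓ ^ n)) = 0 := t.2
        have h2 := congrArg Subtype.val ht
        show ℓ • ((t : torsionSub G (ℓ ^ n)) : G) = 0
        exact h2⟩
      left_inv := fun y => by ext; rfl
      right_inv := fun t => by ext; rfl
      map_add' := fun a b => by ext; rfl }
  have hcardι : Fintype.card ι = h := by
    have h1 : Nat.card (torsionSub G ℓ)
        = Nat.card (∀ i, torsionSub (ZMod (m i)) ℓ) := by
      exact Nat.card_congr (hetors.trans ((torsionCongr e' ℓ).trans (torsionPi _ ℓ))).toEquiv
    have h2 : ∀ i, Nat.card (torsionSub (ZMod (m i)) ℓ) = ℓ := by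
      intro i
      rw [hmk i]
      exact card_torsion_zmod ℓ (k i) hℓ (hk1 i)
    rw [hker, Nat.card_pi] at h1
    simp only [h2] at h1
    rw [Finset.prod_const, Finset.card_univ] at h1
    exact (Nat.pow_right_injective hℓ.two_le h1).symm
  -- each k i = n
  have hkin : ∀ i, k i = n := by
    by_contra hcon
    push_neg at hcon
    obtain ⟨i0, hi0⟩ := hcon
    have hlt : ∑ i, k i < ∑ _i : ι, n :=
      Finset.sum_lt_sum (fun i _ => hkn i)
        ⟨i0, Finset.mem_univ i0, lt_of_le_of_ne (hkn i0) hi0⟩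
    rw [Finset.sum_const, Finset.card_univ, hcardι, smul_eq_mul] at hlt
    omega
  -- assemble final equivalence
  have e3 : (∀ i, ZMod (m i)) ≃+ (∀ _i : ι, ZMod (ℓ ^ n)) :=
    AddEquiv.piCongrRight (fun i =>
      (ZMod.ringEquivCongr (by rw [hmk i, hkin i])).toAddEquiv)
  have e4 : (∀ _i : ι, ZMod (ℓ ^ n)) ≃+ (Fin h → ZMod (ℓ ^ n)) :=
    (RingEquiv.piCongrLeft' (fun _ => ZMod (ℓ ^ n))
      (Fintype.equivFinOfCardEq hcardι)).toAddEquiv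
  exact ⟨(e'.trans e3).trans e4⟩
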